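/- Let n ≥ 1 and p₁,…,pₙ ∈ (0,1]. Then I − Qₙ is invertible, and the vector t = (I − Qₙ)⁻¹·𝟏 satisfies t₀ = (1 + ∑_{i=1}^{n−1} ∏_{j=1}^{i} p_j)/(∏_{i=1}^{n} p_i). (t₀ is the mean latency, in units of the step duration τ, of n-round multiheralded entanglement generation started from the failure state: the mean hitting time of the overall-success state n.) -/

import Mathlib

open Matrix

/-- The matrix `Qₙ` obtained from the transition matrix of `n`-round multiheralded
entanglement generation by deleting the row and column of the overall-success
state `n`: row `i` (for `0 ≤ i ≤ n−1`) has entry `1 − p (i+1)` in column `0` and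
entry `p (i+1)` in column `i+1` (when `i+1 ≤ n−1`), and zeros elsewhere. -/
def multiHeraldedQ (n : ℕ) (p : ℕ → ℝ) : Matrix (Fin n) (Fin n) ℝ :=
  fun i j =>
    if (j : ℕ) = 0 then 1 - p ((i : ℕ) + 1)
    else if (j : ℕ) = (i : ℕ) + 1 then p ((i : ℕ) + 1)
    else 0

lemma mh_mulVec_row (n : ℕ) (hn : 0 < n) (p : ℕ → ℝ) (v : Fin n → ℝ) (i : Fin n) :
    ((1 - multiHeraldedQ n p) *ᵥ v) i
      = v i - (1 - p ((i : ℕ) + 1)) * v ⟨0, hn⟩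
        - (if h : (i : ℕ) + 1 < n then p ((i : ℕ) + 1) * v ⟨(i : ℕ) + 1, h⟩ else 0) := by
  have hQ : ∀ j : Fin n, multiHeraldedQ n p i j * v j
      = (if j = ⟨0, hn⟩ then (1 - p ((i : ℕ) + 1)) * v j else 0)
        + (if h : (i : ℕ) + 1 < n then
            (if j = ⟨(i : ℕ) + 1, h⟩ then p ((i : ℕ) + 1) * v j else 0) else 0) := by
    intro j
    unfold multiHeraldedQ
    by_cases hi : (i : ℕ) + 1 < n
    · rcases eq_or_ne (j : ℕ) 0 with h0 | h0 <;>
        rcases eq_or_ne (j : ℕ) ((i : ℕ) + 1) with h1 | h1 <;>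
        simp [h0, h1, Fin.ext_iff, hi]
    · have h1 : (j : ℕ) ≠ (i : ℕ) + 1 := by have := j.isLt; omega
      rcases eq_or_ne (j : ℕ) 0 with h0 | h0 <;> simp [h0, h1, Fin.ext_iff, hi]
  simp only [Matrix.mulVec, dotProduct, Matrix.sub_apply, Matrix.one_apply, sub_mul]
  rw [Finset.sum_sub_distrib]
  have h1 : ∑ j : Fin n, (if i = j then (1:ℝ) else 0) * v j = v i := by
    simp [ite_mul, Finset.sum_ite_eq]
  rw [h1, Finset.sum_congr rfl (fun j _ => hQ j), Finset.sum_add_distrib]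
  rw [Finset.sum_ite_eq' Finset.univ (⟨0, hn⟩ : Fin n) (fun j => (1 - p ((i:ℕ)+1)) * v j)]
  by_cases hi : (i : ℕ) + 1 < n
  · simp only [dif_pos hi]
    rw [Finset.sum_ite_eq' Finset.univ (⟨(i:ℕ)+1, hi⟩ : Fin n) (fun j => p ((i:ℕ)+1) * v j)]
    simp [sub_sub]; ring
  · simp only [dif_neg hi]
    simp [sub_sub]; ring

noncomputable def mhA (n : ℕ) (p : ℕ → ℝ) (i : ℕ) : ℝ :=
  ∑ k ∈ Finset.range (n - i), ∏ j ∈ Finset.range k, p (i + 1 + j)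

noncomputable def mhB (n : ℕ) (p : ℕ → ℝ) (i : ℕ) : ℝ :=
  1 - ∏ j ∈ Finset.range (n - i), p (i + 1 + j)

noncomputable def mhE0 (n : ℕ) (p : ℕ → ℝ) : ℝ :=
  mhA n p 0 / ∏ j ∈ Finset.range n, p (1 + j)

noncomputable def mhU (n : ℕ) (p : ℕ → ℝ) : Fin n → ℝ :=
  fun i => mhA n p (i : ℕ) + mhB n p (i : ℕ) * mhE0 n p

lemma mhA_rec (n : ℕ) (p : ℕ → ℝ) (m : ℕ) (hm : m < n) :
    mhA n p m = 1 + p (m + 1) * mhA n p (m + 1) := by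
  have h : n - m = (n - (m + 1)) + 1 := by omega
  rw [mhA, mhA, h, Finset.sum_range_succ']
  have hterm : ∀ k ∈ Finset.range (n - (m + 1)),
      ∏ j ∈ Finset.range (k + 1), p (m + 1 + j)
        = p (m + 1) * ∏ j ∈ Finset.range k, p (m + 1 + 1 + j) := by
    intro k _
    rw [Finset.prod_range_succ']
    have : ∀ j ∈ Finset.range k, p (m + 1 + (j + 1)) = p (m + 1 + 1 + j) := by
      intro j _; congr 1; omega
    rw [Finset.prod_congr rfl this, add_zero, mul_comm]
  rw [Finset.sum_congr rfl hterm, ← Finset.mul_sum]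
  simp [add_comm]

lemma mhB_rec (n : ℕ) (p : ℕ → ℝ) (m : ℕ) (hm : m < n) :
    mhB n p m = (1 - p (m + 1)) + p (m + 1) * mhB n p (m + 1) := by
  have h : n - m = (n - (m + 1)) + 1 := by omega
  rw [mhB, mhB, h, Finset.prod_range_succ']
  have : ∀ j ∈ Finset.range (n - (m + 1)), p (m + 1 + (j + 1)) = p (m + 1 + 1 + j) := by
    intro j _; congr 1; omega
  rw [Finset.prod_congr rfl this, add_zero]
  ring

lemma mhB_zero (n : ℕ) (p : ℕ → ℝ) :
    mhB n p 0 = 1 - ∏ j ∈ Finset.range n, p (1 + j) := by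
  simp [mhB]

lemma mh_u0 (n : ℕ) (p : ℕ → ℝ) (hP : (∏ j ∈ Finset.range n, p (1 + j)) ≠ 0) :
    mhA n p 0 + mhB n p 0 * mhE0 n p = mhE0 n p := by
  rw [mhB_zero, mhE0]
  field_simp
  ring

lemma mh_solves (n : ℕ) (hn : 0 < n) (p : ℕ → ℝ)
    (hP : (∏ j ∈ Finset.range n, p (1 + j)) ≠ 0) :
    (1 - multiHeraldedQ n p) *ᵥ mhU n p = fun _ => (1:ℝ) := by
  funext i
  rw [mh_mulVec_row n hn p _ i]
  have hu0 := mh_u0 n p hP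
  simp only [mhU]
  by_cases hi : (i : ℕ) + 1 < n
  · rw [dif_pos hi]
    have hA := mhA_rec n p (i : ℕ) i.isLt
    have hB := mhB_rec n p (i : ℕ) i.isLt
    show mhA n p (i : ℕ) + mhB n p (i : ℕ) * mhE0 n p
        - (1 - p ((i : ℕ) + 1)) * (mhA n p 0 + mhB n p 0 * mhE0 n p)
        - p ((i : ℕ) + 1) * (mhA n p ((i : ℕ) + 1) + mhB n p ((i : ℕ) + 1) * mhE0 n p) = 1
    linear_combination hA + mhE0 n p * hB - (1 - p ((i : ℕ) + 1)) * hu0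
  · rw [dif_neg hi]
    have hn1 : n - (i : ℕ) = 1 := by have := i.isLt; omega
    have hA1 : mhA n p (i : ℕ) = 1 := by rw [mhA, hn1]; simp
    have hB1 : mhB n p (i : ℕ) = 1 - p ((i : ℕ) + 1) := by rw [mhB, hn1]; simp
    show mhA n p (i : ℕ) + mhB n p (i : ℕ) * mhE0 n p
        - (1 - p ((i : ℕ) + 1)) * (mhA n p 0 + mhB n p 0 * mhE0 n p) - 0 = 1
    linear_combination hA1 + mhE0 n p * hB1 - (1 - p ((i : ℕ) + 1)) * hu0

/-- Mean latency of `n`-round multiheralded entanglement generation via the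
fundamental matrix: for `p₁,…,pₙ ∈ (0,1]`, `I − Qₙ` is invertible and
`t = (I − Qₙ)⁻¹·𝟏` satisfies
`t₀ = (1 + ∑_{i=1}^{n−1} ∏_{j=1}^{i} p_j)/(∏_{i=1}^{n} p_i)`. -/
theorem multiheralded_mean_latency (n : ℕ) (hn : 0 < n) (p : ℕ → ℝ)
    (hp : ∀ i ∈ Finset.Icc 1 n, 0 < p i ∧ p i ≤ 1) :
    let t : Fin n → ℝ := (1 - multiHeraldedQ n p)⁻¹ *ᵥ (fun _ => 1)
    IsUnit (1 - multiHeraldedQ n p) ∧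
      t ⟨0, hn⟩
        = (1 + ∑ i ∈ Finset.Icc 1 (n - 1), ∏ j ∈ Finset.Icc 1 i, p j)
            / (∏ i ∈ Finset.Icc 1 n, p i) := by
  intro t
  have hpiv : ∀ m, m < n → 0 < p (m + 1) := by
    intro m hm
    exact (hp (m + 1) (by rw [Finset.mem_Icc]; omega)).1
  have hPpos : 0 < ∏ j ∈ Finset.range n, p (1 + j) := by
    apply Finset.prod_pos
    intro j hj
    rw [add_comm]
    exact hpiv j (Finset.mem_range.mp hj)
  have hP : (∏ j ∈ Finset.range n, p (1 + j)) ≠ 0 := ne_of_gt hPpos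
  -- determinant nonzero
  have hdet : (1 - multiHeraldedQ n p).det ≠ 0 := by
    intro h
    obtain ⟨v, hv0, hv⟩ := Matrix.exists_mulVec_eq_zero_iff.mpr h
    have key : ∀ m, (hm : m < n) → v ⟨m, hm⟩ = v ⟨0, hn⟩ := by
      intro m
      induction m with
      | zero => intro hm; rfl
      | succ k ih =>
        intro hm
        have hk : k < n := Nat.lt_of_succ_lt hm
        have hrow := congrFun hv ⟨k, hk⟩
        rw [mh_mulVec_row n hn p v ⟨k, hk⟩] at hrow
        simp only [Pi.zero_apply] at hrow
        rw [dif_pos (show ((⟨k, hk⟩ : Fin n) : ℕ) + 1 < n from hm)] at hrow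
        have hpk := hpiv k hk
        have ihk := ih hk
        have h2 : p (k + 1) * (v ⟨0, hn⟩ - v ⟨k + 1, hm⟩) = 0 := by
          linear_combination hrow - ihk
        have h3 := (mul_eq_zero.mp h2).resolve_left (ne_of_gt hpk)
        linarith
    have hlastlt : n - 1 < n := by omega
    have hrow := congrFun hv ⟨n - 1, hlastlt⟩
    rw [mh_mulVec_row n hn p v ⟨n - 1, hlastlt⟩] at hrow
    simp only [Pi.zero_apply] at hrow
    rw [dif_neg (show ¬ ((⟨n - 1, hlastlt⟩ : Fin n) : ℕ) + 1 < n by simp; omega)] at hrow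
    have hkey := key (n - 1) hlastlt
    have hpn := hpiv (n - 1) hlastlt
    have h2 : p ((n - 1) + 1) * v ⟨0, hn⟩ = 0 := by linear_combination hrow - hkey
    have hv00 : v ⟨0, hn⟩ = 0 := by
      rcases mul_eq_zero.mp h2 with h | h
      · exact absurd h (ne_of_gt hpn)
      · exact h
    apply hv0
    funext j
    have := key (j : ℕ) j.isLt
    rw [Fin.eta] at this
    rw [this, hv00]
    rfl
  have hUnit : IsUnit (1 - multiHeraldedQ n p) :=
    (Matrix.isUnit_iff_isUnit_det _).mpr (isUnit_iff_ne_zero.mpr hdet)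
  refine ⟨hUnit, ?_⟩
  have ht : t = mhU n p := by
    show (1 - multiHeraldedQ n p)⁻¹ *ᵥ (fun _ => (1:ℝ)) = mhU n p
    rw [← mh_solves n hn p hP, Matrix.mulVec_mulVec,
      Matrix.nonsing_inv_mul _ (isUnit_iff_ne_zero.mpr hdet), Matrix.one_mulVec]
  rw [ht]
  have hu0 := mh_u0 n p hP
  show mhA n p 0 + mhB n p 0 * mhE0 n p = _
  rw [hu0, mhE0]
  have hden : ∏ j ∈ Finset.range n, p (1 + j) = ∏ i ∈ Finset.Icc 1 n, p i := by
    rw [← Finset.Ico_add_one_right_eq_Icc, Finset.prod_Ico_eq_prod_range]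
    congr 1
  have hnum : mhA n p 0 = 1 + ∑ i ∈ Finset.Icc 1 (n - 1), ∏ j ∈ Finset.Icc 1 i, p j := by
    have e1 : ∀ k : ℕ, ∏ j ∈ Finset.Icc 1 k, p j = ∏ j ∈ Finset.range k, p (1 + j) := by
      intro k
      rw [← Finset.Ico_add_one_right_eq_Icc, Finset.prod_Ico_eq_prod_range]
      congr 1
    rw [Finset.sum_congr rfl (fun i _ => e1 i), ← Finset.Ico_add_one_right_eq_Icc,
      Finset.sum_Ico_eq_sum_range]
    have h : n - 0 = (n - 1) + 1 := by omega
    rw [mhA, h, Finset.sum_range_succ']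
    have h2 : n - 1 + 1 - 1 = n - 1 := by omega
    rw [h2]
    simp only [Finset.prod_range_zero, zero_add]
    rw [add_comm]
    congr 1
    refine Finset.sum_congr rfl fun k _ => ?_
    refine Finset.prod_congr (by congr 1; omega) fun j _ => ?_
    congr 1
  rw [hnum, hden]
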